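/- (Theorem 4.3 (i), rejection test for nice preemptive instances.) Let T > 0. Define I_exp = { i : s_i > T/2 }, I_chp = { i : s_i ≤ T/2 }, I_exp^+ = { i ∈ I_exp : T ≤ s_i + P(C_i) }, I_exp^0 = { i ∈ I_exp : (3/4)T < s_i + P(C_i) < T }, I_exp^- = { i ∈ I_exp : s_i + P(C_i) ≤ (3/4)T }, and α_i' = ⌊P(C_i)/(T − s_i)⌋. Assume the instance is nice for T, i.e. I_exp^0 = ∅. Let L_nice = P(J) + Σ_{i∈I_exp^+} α_i'·s_i + Σ_{i∈I_exp^- ∪ I_chp} s_i and m_nice = ⌈|I_exp^-|/2⌉ + Σ_{i∈I_exp^+} α_i'. If there exists a feasible preemptive schedule with makespan at most T, then m·T ≥ L_nice and m ≥ m_nice. Equivalently, if m·T < L_nice or m < m_nice, then T is strictly smaller than the optimal preemptive makespan. -/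

import Mathlib

open Classical Finset

/-- A feasible preemptive schedule with makespan at most `M` for an instance of scheduling
with batch setup times: machines `υ`, classes `γ`, jobs `ι`, class assignment `cl`,
processing times `t`, setup times `s`. Each job `j` is given a finite set of job pieces
`(u, a, b)` (job `j` runs on machine `u` during `(a, b)`), the pieces of one job are
pairwise disjoint in time (no parallelization) and their lengths sum to `t j`; each machine
carries finitely many setup intervals `(i, a)` representing the interval `(a, a + s i)`;
on each machine all job-piece and setup intervals are pairwise disjoint, and every job
piece of a class-`i` job is preceded by a class-`i` setup on the same machine with no
foreign setup or foreign job piece intersecting the time in between. -/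
structure PSchedule (υ : Type*) {γ ι : Type*} [Fintype υ] [Fintype γ] [Fintype ι]
    (cl : ι → γ) (t : ι → ℝ) (s : γ → ℝ) (M : ℝ) where
  pieces : ι → Finset (υ × ℝ × ℝ)
  setups : υ → Finset (γ × ℝ)
  pieces_bounds : ∀ j, ∀ p ∈ pieces j, 0 ≤ p.2.1 ∧ p.2.1 < p.2.2 ∧ p.2.2 ≤ M
  pieces_no_parallel : ∀ j, ∀ p ∈ pieces j, ∀ q ∈ pieces j, p ≠ q →
    p.2.2 ≤ q.2.1 ∨ q.2.2 ≤ p.2.1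
  pieces_sum : ∀ j, (∑ p ∈ pieces j, (p.2.2 - p.2.1)) = t j
  setup_bounds : ∀ u, ∀ q ∈ setups u, 0 ≤ q.2 ∧ q.2 + s q.1 ≤ M
  machine_pieces_disjoint : ∀ (j₁ j₂ : ι), ∀ p₁ ∈ pieces j₁, ∀ p₂ ∈ pieces j₂,
    p₁.1 = p₂.1 → (j₁ ≠ j₂ ∨ p₁ ≠ p₂) → p₁.2.2 ≤ p₂.2.1 ∨ p₂.2.2 ≤ p₁.2.1
  machine_setups_disjoint : ∀ (u : υ), ∀ q₁ ∈ setups u, ∀ q₂ ∈ setups u, q₁ ≠ q₂ →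
    q₁.2 + s q₁.1 ≤ q₂.2 ∨ q₂.2 + s q₂.1 ≤ q₁.2
  machine_piece_setup_disjoint : ∀ (j : ι), ∀ p ∈ pieces j, ∀ q ∈ setups p.1,
    p.2.2 ≤ q.2 ∨ q.2 + s q.1 ≤ p.2.1
  setup_before : ∀ (j : ι), ∀ p ∈ pieces j, ∃ a' : ℝ, (cl j, a') ∈ setups p.1 ∧
    a' + s (cl j) ≤ p.2.1 ∧
    (∀ q ∈ setups p.1, q.1 ≠ cl j → ¬ (q.2 < p.2.1 ∧ a' + s (cl j) < q.2 + s q.1)) ∧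
    (∀ j' : ι, cl j' ≠ cl j → ∀ p' ∈ pieces j', p'.1 = p.1 →
      ¬ (p'.2.1 < p.2.1 ∧ a' + s (cl j) < p'.2.2))

/-- The load of machine `u` in a preemptive schedule: the total length of all job-piece
and setup intervals on `u`. -/
noncomputable def pLoad {υ γ ι : Type*} [Fintype υ] [Fintype γ] [Fintype ι]
    {cl : ι → γ} {t : ι → ℝ} {s : γ → ℝ} {M : ℝ}
    (σ : PSchedule υ cl t s M) (u : υ) : ℝ :=
  (∑ j, ∑ p ∈ (σ.pieces j).filter (fun p => p.1 = u), (p.2.2 - p.2.1)) +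
  (∑ q ∈ σ.setups u, s q.1)

open MeasureTheory in
lemma sum_lengths_le {β : Type*} (F : Finset β) (a b : β → ℝ) (M : ℝ) (hM : 0 ≤ M)
    (hb : ∀ p ∈ F, 0 ≤ a p ∧ a p ≤ b p ∧ b p ≤ M)
    (hd : ∀ p ∈ F, ∀ q ∈ F, p ≠ q → b p ≤ a q ∨ b q ≤ a p) :
    ∑ p ∈ F, (b p - a p) ≤ M := by
  have hdisj : (F : Set β).PairwiseDisjoint (fun p => Set.Ioo (a p) (b p)) := by
    intro p hp q hq hpq
    rw [Function.onFun, Set.Ioo_disjoint_Ioo]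
    rcases hd p hp q hq hpq with h | h
    · exact le_trans (min_le_left _ _) (h.trans (le_max_right _ _))
    · exact le_trans (min_le_right _ _) (h.trans (le_max_left _ _))
  have key : ∑ p ∈ F, volume (Set.Ioo (a p) (b p)) ≤ volume (Set.Icc (0:ℝ) M) := by
    rw [← measure_biUnion_finset hdisj (fun p _ => measurableSet_Ioo)]
    apply measure_mono
    intro x hx
    simp only [Set.mem_iUnion] at hx
    obtain ⟨p, hp, hx⟩ := hx
    obtain ⟨h0, _, hM'⟩ := hb p hp
    exact ⟨h0.trans hx.1.le, hx.2.le.trans hM'⟩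
  simp only [Real.volume_Ioo, Real.volume_Icc, sub_zero] at key
  rw [← ENNReal.ofReal_sum_of_nonneg (fun p hp => by linarith [(hb p hp).2.1])] at key
  exact (ENNReal.ofReal_le_ofReal_iff hM).1 key


lemma machine_bound {υ γ ι : Type*} [Fintype υ] [Fintype γ] [Fintype ι]
    {cl : ι → γ} {t : ι → ℝ} {s : γ → ℝ} {M : ℝ} (hs : ∀ i, 0 < s i) (hM : 0 ≤ M)
    (σ : PSchedule υ cl t s M) (u : υ) (J' : Finset ι) (S' : Finset (γ × ℝ))
    (hS' : S' ⊆ σ.setups u) :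
    (∑ j ∈ J', ∑ p ∈ (σ.pieces j).filter (fun p => p.1 = u), (p.2.2 - p.2.1))
      + ∑ q ∈ S', s q.1 ≤ M := by
  classical
  set Fp : Finset (Σ _ : ι, υ × ℝ × ℝ) :=
    J'.sigma (fun j => (σ.pieces j).filter (fun p => p.1 = u)) with hFp
  set F := Fp.disjSum S' with hF
  set A : (Σ _ : ι, υ × ℝ × ℝ) ⊕ (γ × ℝ) → ℝ :=
    Sum.elim (fun x => x.2.2.1) (fun q => q.2) with hA
  set B : (Σ _ : ι, υ × ℝ × ℝ) ⊕ (γ × ℝ) → ℝ :=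
    Sum.elim (fun x => x.2.2.2) (fun q => q.2 + s q.1) with hB
  have hmemP : ∀ {j : ι} {p : υ × ℝ × ℝ}, (Sum.inl ⟨j, p⟩ : _ ⊕ (γ × ℝ)) ∈ F →
      j ∈ J' ∧ p ∈ σ.pieces j ∧ p.1 = u := by
    intro j p h
    rw [hF, inl_mem_disjSum, hFp, mem_sigma, mem_filter] at h
    exact ⟨h.1, h.2.1, h.2.2⟩
  have hmemS : ∀ {q : γ × ℝ}, (Sum.inr q : (Σ _ : ι, υ × ℝ × ℝ) ⊕ _) ∈ F → q ∈ σ.setups u := by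
    intro q h
    rw [hF, inr_mem_disjSum] at h
    exact hS' h
  have hbd : ∀ p ∈ F, 0 ≤ A p ∧ A p ≤ B p ∧ B p ≤ M := by
    rintro (⟨j, p⟩ | q) h
    · obtain ⟨_, hp, _⟩ := hmemP h
      obtain ⟨h1, h2, h3⟩ := σ.pieces_bounds j p hp
      exact ⟨h1, h2.le, h3⟩
    · obtain ⟨h1, h2⟩ := σ.setup_bounds u q (hmemS h)
      exact ⟨h1, by simp [A, B]; linarith [hs q.1], h2⟩
  have hdis : ∀ p ∈ F, ∀ q ∈ F, p ≠ q → B p ≤ A q ∨ B q ≤ A p := by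
    rintro (⟨j₁, p₁⟩ | q₁) h₁ (⟨j₂, p₂⟩ | q₂) h₂ hne
    · obtain ⟨_, hp₁, hu₁⟩ := hmemP h₁
      obtain ⟨_, hp₂, hu₂⟩ := hmemP h₂
      have hor : j₁ ≠ j₂ ∨ p₁ ≠ p₂ := by
        by_cases hj : j₁ = j₂
        · subst hj
          exact Or.inr fun hp => hne (by rw [hp])
        · exact Or.inl hj
      exact σ.machine_pieces_disjoint j₁ j₂ p₁ hp₁ p₂ hp₂ (hu₁.trans hu₂.symm) hor
    · obtain ⟨_, hp₁, hu₁⟩ := hmemP h₁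
      have : q₂ ∈ σ.setups p₁.1 := by rw [hu₁]; exact hmemS h₂
      exact σ.machine_piece_setup_disjoint j₁ p₁ hp₁ q₂ this
    · obtain ⟨_, hp₂, hu₂⟩ := hmemP h₂
      have : q₁ ∈ σ.setups p₂.1 := by rw [hu₂]; exact hmemS h₁
      rcases σ.machine_piece_setup_disjoint j₂ p₂ hp₂ q₁ this with h | h
      · exact Or.inr h
      · exact Or.inl h
    · refine σ.machine_setups_disjoint u q₁ (hmemS h₁) q₂ (hmemS h₂) fun h => hne (by rw [h])
  have key := sum_lengths_le F A B M hM hbd hdis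
  have hsum : ∑ x ∈ F, (B x - A x)
      = (∑ j ∈ J', ∑ p ∈ (σ.pieces j).filter (fun p => p.1 = u), (p.2.2 - p.2.1))
        + ∑ q ∈ S', s q.1 := by
    rw [hF, sum_disjSum, hFp, sum_sigma]
    congr 1
    apply sum_congr rfl
    intro q _
    simp [A, B]
  rwa [hsum] at key

set_option maxHeartbeats 1000000 in
/-- Theorem 4.3 (i), rejection test for nice preemptive instances: if the instance is nice
for `T` (i.e. `I_exp^0 = ∅`) and a feasible preemptive schedule with makespan at most `T`
exists, then `m·T ≥ L_nice` and `m ≥ m_nice`. -/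
theorem pmtn_nice_rejection_test {υ γ ι : Type*} [Fintype υ] [Fintype γ] [Fintype ι]
    (cl : ι → γ) (t : ι → ℝ) (s : γ → ℝ)
    (ht : ∀ j, 0 < t j) (hs : ∀ i, 0 < s i)
    (hcl : ∀ i : γ, ∃ j, cl j = i)
    (T : ℝ) (hT : 0 < T)
    (P : γ → ℝ) (hP : ∀ i, P i = ∑ j ∈ univ.filter (fun j => cl j = i), t j)
    (Iexpp Iexp0 Iexpm Ichp : Finset γ)
    (hIexpp : Iexpp = univ.filter (fun i => T / 2 < s i ∧ T ≤ s i + P i))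
    (hIexp0 : Iexp0 = univ.filter (fun i =>
      T / 2 < s i ∧ 3 / 4 * T < s i + P i ∧ s i + P i < T))
    (hIexpm : Iexpm = univ.filter (fun i => T / 2 < s i ∧ s i + P i ≤ 3 / 4 * T))
    (hIchp : Ichp = univ.filter (fun i => s i ≤ T / 2))
    (α' : γ → ℤ) (hα' : ∀ i, α' i = ⌊P i / (T - s i)⌋)
    (hnice : Iexp0 = ∅)
    (Lnice : ℝ)
    (hLnice : Lnice = (∑ j, t j) + (∑ i ∈ Iexpp, (α' i : ℝ) * s i) +
      (∑ i ∈ Iexpm ∪ Ichp, s i))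
    (mnice : ℤ)
    (hmnice : mnice = (((Iexpm.card + 1) / 2 : ℕ) : ℤ) + (∑ i ∈ Iexpp, α' i))
    (σ : PSchedule υ cl t s T) :
    Lnice ≤ (Fintype.card υ : ℝ) * T ∧ mnice ≤ (Fintype.card υ : ℤ) := by
  classical
  -- count of class-i setups over all machines
  set cnt : γ → ℕ := fun i => ∑ u, ((σ.setups u).filter (fun q => q.1 = i)).card with hcnt
  -- every class has a setup somewhere, and s i < T
  have hwitness : ∀ i : γ, (s i < T) ∧ ∃ u, ∃ q ∈ σ.setups u, q.1 = i := by
    intro i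
    obtain ⟨j, hj⟩ := hcl i
    have hne : (σ.pieces j).Nonempty := by
      rw [Finset.nonempty_iff_ne_empty]
      intro h
      have := σ.pieces_sum j
      rw [h] at this
      simp at this
      exact absurd this.symm (ne_of_gt (ht j))
    obtain ⟨p, hp⟩ := hne
    obtain ⟨a', ha', hle, -, -⟩ := σ.setup_before j p hp
    obtain ⟨ha0, -⟩ := σ.setup_bounds p.1 _ ha'
    obtain ⟨-, hlt, hpT⟩ := σ.pieces_bounds j p hp
    refine ⟨by rw [← hj]; linarith, p.1, (cl j, a'), ha', hj⟩
  have hsT : ∀ i, s i < T := fun i => (hwitness i).1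
  have hcnt1 : ∀ i, 1 ≤ cnt i := by
    intro i
    obtain ⟨-, u, q, hq, hqi⟩ := hwitness i
    have h1 : 1 ≤ ((σ.setups u).filter (fun q => q.1 = i)).card :=
      Finset.card_pos.2 ⟨q, Finset.mem_filter.2 ⟨hq, hqi⟩⟩
    have h2 : ((σ.setups u).filter (fun q => q.1 = i)).card
        ≤ ∑ v, ((σ.setups v).filter (fun q => q.1 = i)).card :=
      Finset.single_le_sum (f := fun v => ((σ.setups v).filter (fun q => q.1 = i)).card)
        (fun _ _ => Nat.zero_le _) (mem_univ u)
    simp only [hcnt]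
    exact h1.trans h2
  have piecework : ∀ j : ι,
      ∑ u, ∑ p ∈ (σ.pieces j).filter (fun p => p.1 = u), (p.2.2 - p.2.1) = t j :=
    fun j => (Finset.sum_fiberwise (σ.pieces j) (fun p => p.1)
      (fun p => p.2.2 - p.2.1)).trans (σ.pieces_sum j)
  -- the machines hosting a class-i setup, and P i ≤ cnt i * (T - s i)
  have hPcnt : ∀ i, P i ≤ (cnt i : ℝ) * (T - s i) := by
    intro i
    set A : Finset υ :=
      univ.filter (fun u => ((σ.setups u).filter (fun q => q.1 = i)).Nonempty) with hA
    have hAcard : A.card ≤ cnt i := by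
      rw [hcnt]
      calc A.card = ∑ u ∈ A, 1 := by rw [Finset.sum_const, smul_eq_mul, mul_one]
        _ ≤ ∑ u ∈ A, ((σ.setups u).filter (fun q => q.1 = i)).card :=
            Finset.sum_le_sum (fun u hu => Finset.card_pos.2 ((Finset.mem_filter.1 hu).2))
        _ ≤ ∑ u, ((σ.setups u).filter (fun q => q.1 = i)).card :=
            Finset.sum_le_sum_of_subset (Finset.subset_univ A)
    set w : υ → ℝ := fun u => ∑ j ∈ univ.filter (fun j => cl j = i),
      ∑ p ∈ (σ.pieces j).filter (fun p => p.1 = u), (p.2.2 - p.2.1) with hw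
    have hwle : ∀ u : υ, w u ≤ if u ∈ A then T - s i else 0 := by
      intro u
      by_cases hu : u ∈ A
      · rw [if_pos hu]
        obtain ⟨q₀, hq₀⟩ := (Finset.mem_filter.1 hu).2
        obtain ⟨hq₀m, hq₀i⟩ := Finset.mem_filter.1 hq₀
        have := machine_bound hs hT.le σ u (univ.filter (fun j => cl j = i)) {q₀}
          (Finset.singleton_subset_iff.2 hq₀m)
        rw [Finset.sum_singleton, hq₀i] at this
        rw [hw]
        linarith
      · rw [if_neg hu, hw]
        apply le_of_eq
        apply Finset.sum_eq_zero
        intro j hj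
        have hji : cl j = i := (Finset.mem_filter.1 hj).2
        apply Finset.sum_eq_zero
        intro p hp
        obtain ⟨hpm, hpu⟩ := Finset.mem_filter.1 hp
        exfalso
        obtain ⟨a', ha', -, -, -⟩ := σ.setup_before j p hpm
        refine hu (Finset.mem_filter.2 ⟨mem_univ u, ⟨(cl j, a'), Finset.mem_filter.2 ⟨?_, hji⟩⟩⟩)
        rwa [← hpu]
      -- done
    have hPw : P i = ∑ u, w u := by
      rw [hP, hw]
      rw [Finset.sum_comm]
      exact Finset.sum_congr rfl (fun j _ => (piecework j).symm)
    have hsum_ite : ∑ u, (if u ∈ A then T - s i else 0) = (A.card : ℝ) * (T - s i) := by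
      rw [Finset.sum_ite_mem, Finset.univ_inter, Finset.sum_const, nsmul_eq_mul]
    have h1 : P i ≤ (A.card : ℝ) * (T - s i) := by
      rw [hPw, ← hsum_ite]
      exact Finset.sum_le_sum (fun u _ => hwle u)
    calc P i ≤ (A.card : ℝ) * (T - s i) := h1
      _ ≤ (cnt i : ℝ) * (T - s i) := by
          apply mul_le_mul_of_nonneg_right _ (by linarith [hsT i])
          exact_mod_cast hAcard
  have hαcnt : ∀ i, α' i ≤ (cnt i : ℤ) := by
    intro i
    have hpos : 0 < T - s i := by linarith [hsT i]
    have h1 : (α' i : ℝ) ≤ P i / (T - s i) := by rw [hα']; exact Int.floor_le _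
    have h2 : P i / (T - s i) ≤ (cnt i : ℝ) := (div_le_iff₀ hpos).2 (hPcnt i)
    exact_mod_cast h1.trans h2
  -- load accounting
  have hload : ∀ u, pLoad σ u ≤ T := by
    intro u
    have := machine_bound hs hT.le σ u univ (σ.setups u) (Finset.Subset.refl _)
    rwa [pLoad]
  have hloadsum : ∑ u, pLoad σ u = (∑ j, t j) + ∑ i, (cnt i : ℝ) * s i := by
    unfold pLoad
    rw [Finset.sum_add_distrib]
    congr 1
    · rw [Finset.sum_comm]
      exact Finset.sum_congr rfl (fun j _ => piecework j)
    · have hsw : ∀ u : υ, ∑ q ∈ σ.setups u, s q.1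
          = ∑ i, (((σ.setups u).filter (fun q => q.1 = i)).card : ℝ) * s i := by
        intro u
        have h0 : ∑ i, ∑ q ∈ (σ.setups u).filter (fun q => q.1 = i), s q.1
            = ∑ q ∈ σ.setups u, s q.1 :=
          Finset.sum_fiberwise (σ.setups u) (fun q => q.1) (fun q => s q.1)
        rw [← h0]
        apply Finset.sum_congr rfl
        intro i _
        rw [Finset.sum_congr rfl (fun q hq => by rw [(Finset.mem_filter.1 hq).2]),
          Finset.sum_const, nsmul_eq_mul]
      rw [Finset.sum_congr rfl (fun u _ => hsw u), Finset.sum_comm]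
      apply Finset.sum_congr rfl
      intro i _
      rw [← Finset.sum_mul, hcnt]
      push_cast
      ring
  -- first inequality
  have goal1 : Lnice ≤ (Fintype.card υ : ℝ) * T := by
    have hub : ∑ u, pLoad σ u ≤ (Fintype.card υ : ℝ) * T := by
      calc ∑ u, pLoad σ u ≤ ∑ _u : υ, T := Finset.sum_le_sum (fun u _ => hload u)
        _ = (Fintype.card υ : ℝ) * T := by rw [Finset.sum_const, nsmul_eq_mul, Finset.card_univ]
    have hdisj1 : Disjoint Iexpp (Iexpm ∪ Ichp) := by
      rw [Finset.disjoint_left]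
      intro i hi hi'
      rw [hIexpp, Finset.mem_filter] at hi
      rcases Finset.mem_union.1 hi' with h | h
      · rw [hIexpm, Finset.mem_filter] at h
        linarith [hi.2.2, h.2.2]
      · rw [hIchp, Finset.mem_filter] at h
        linarith [hi.2.1, h.2]
    have hsub : Iexpp ∪ (Iexpm ∪ Ichp) ⊆ univ := Finset.subset_univ _
    have hlow : (∑ i ∈ Iexpp, (α' i : ℝ) * s i) + (∑ i ∈ Iexpm ∪ Ichp, s i)
        ≤ ∑ i, (cnt i : ℝ) * s i := by
      have h1 : (∑ i ∈ Iexpp, (α' i : ℝ) * s i) + (∑ i ∈ Iexpm ∪ Ichp, s i)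
          ≤ ∑ i ∈ Iexpp ∪ (Iexpm ∪ Ichp), (cnt i : ℝ) * s i := by
        rw [Finset.sum_union hdisj1]
        apply add_le_add
        · apply Finset.sum_le_sum
          intro i _
          apply mul_le_mul_of_nonneg_right _ (hs i).le
          exact_mod_cast hαcnt i
        · apply Finset.sum_le_sum
          intro i _
          have h1 : (1 : ℝ) ≤ (cnt i : ℝ) := by exact_mod_cast hcnt1 i
          exact le_mul_of_one_le_left (hs i).le h1
      refine h1.trans (Finset.sum_le_sum_of_subset_of_nonneg hsub ?_)
      intro i _ _
      exact mul_nonneg (Nat.cast_nonneg _) (hs i).le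
    rw [hLnice]
    calc (∑ j, t j) + (∑ i ∈ Iexpp, (α' i : ℝ) * s i) + (∑ i ∈ Iexpm ∪ Ichp, s i)
        ≤ (∑ j, t j) + ∑ i, (cnt i : ℝ) * s i := by linarith
      _ = ∑ u, pLoad σ u := hloadsum.symm
      _ ≤ (Fintype.card υ : ℝ) * T := hub
  -- second inequality
  have goal2 : mnice ≤ (Fintype.card υ : ℤ) := by
    set Exp : Finset γ := univ.filter (fun i => T / 2 < s i) with hExp
    have hone : ∀ u : υ, ((σ.setups u).filter (fun q => T / 2 < s q.1)).card ≤ 1 := by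
      intro u
      rw [Finset.card_le_one]
      intro q₁ hq₁ q₂ hq₂
      by_contra hne
      obtain ⟨hq₁m, hq₁e⟩ := Finset.mem_filter.1 hq₁
      obtain ⟨hq₂m, hq₂e⟩ := Finset.mem_filter.1 hq₂
      obtain ⟨h10, h1T⟩ := σ.setup_bounds u q₁ hq₁m
      obtain ⟨h20, h2T⟩ := σ.setup_bounds u q₂ hq₂m
      rcases σ.machine_setups_disjoint u q₁ hq₁m q₂ hq₂m hne with h | h
      · linarith
      · linarith
    have hexp_le : ∑ i ∈ Exp, cnt i ≤ Fintype.card υ := by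
      have key : ∀ u : υ, ∑ i ∈ Exp, ((σ.setups u).filter (fun q => q.1 = i)).card
          = ((σ.setups u).filter (fun q => T / 2 < s q.1)).card := by
        intro u
        have k1 : ∑ i ∈ Exp, ((σ.setups u).filter (fun q => q.1 = i)).card
            = ((σ.setups u).filter (fun q => q.1 ∈ Exp)).card :=
          Finset.sum_card_fiberwise_eq_card_filter (σ.setups u) Exp (fun q => q.1)
        rw [k1]
        congr 1
        apply Finset.filter_congr
        intro q _
        rw [hExp]
        simp
      calc ∑ i ∈ Exp, cnt i = ∑ u, ∑ i ∈ Exp, ((σ.setups u).filter (fun q => q.1 = i)).card := by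
            rw [Finset.sum_comm]
        _ = ∑ u, ((σ.setups u).filter (fun q => T / 2 < s q.1)).card :=
            Finset.sum_congr rfl (fun u _ => key u)
        _ ≤ ∑ _u : υ, 1 := Finset.sum_le_sum (fun u _ => hone u)
        _ = Fintype.card υ := by rw [Finset.sum_const, smul_eq_mul, mul_one, Finset.card_univ]
    have hsubE : Iexpp ∪ Iexpm ⊆ Exp := by
      intro i hi
      rw [hExp, Finset.mem_filter]
      rcases Finset.mem_union.1 hi with h | h
      · rw [hIexpp, Finset.mem_filter] at h
        exact ⟨mem_univ i, h.2.1⟩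
      · rw [hIexpm, Finset.mem_filter] at h
        exact ⟨mem_univ i, h.2.1⟩
    have hdisj2 : Disjoint Iexpp Iexpm := by
      rw [Finset.disjoint_left]
      intro i hi hi'
      rw [hIexpp, Finset.mem_filter] at hi
      rw [hIexpm, Finset.mem_filter] at hi'
      linarith [hi.2.2, hi'.2.2]
    have hsplit : ∑ i ∈ Iexpp, cnt i + ∑ i ∈ Iexpm, cnt i ≤ Fintype.card υ := by
      rw [← Finset.sum_union hdisj2]
      exact le_trans (Finset.sum_le_sum_of_subset hsubE) hexp_le
    have h1 : ∑ i ∈ Iexpp, α' i ≤ (∑ i ∈ Iexpp, cnt i : ℕ) := by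
      push_cast
      exact Finset.sum_le_sum (fun i _ => hαcnt i)
    have h2 : (Iexpm.card : ℤ) ≤ (∑ i ∈ Iexpm, cnt i : ℕ) := by
      push_cast
      calc (Iexpm.card : ℤ) = ∑ _i ∈ Iexpm, (1 : ℤ) := by simp
        _ ≤ ∑ i ∈ Iexpm, (cnt i : ℤ) := Finset.sum_le_sum (fun i _ => by exact_mod_cast hcnt1 i)
    have h3 : (((Iexpm.card + 1) / 2 : ℕ) : ℤ) ≤ (Iexpm.card : ℤ) := by
      have : (Iexpm.card + 1) / 2 ≤ Iexpm.card := by omega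
      exact_mod_cast this
    rw [hmnice]
    have hcast : ((∑ i ∈ Iexpp, cnt i : ℕ) : ℤ) + ((∑ i ∈ Iexpm, cnt i : ℕ) : ℤ)
        ≤ (Fintype.card υ : ℤ) := by exact_mod_cast hsplit
    linarith
  exact ⟨goal1, goal2⟩
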